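/- If f and g are nonzero univariate rational functions over an infinite field with g(0) defined and g(0) = 1, and f/g is a polynomial p of degree at most d, then p = Σ_{j=0}^{d} H-truncation up to degree d of f·(1−g)^j, where the truncation keeps only monomials of degree ≤ d. More precisely: if B is a polynomial with constant term 1 and A a polynomial such that A = p·B for a polynomial p of degree at most d, then p equals the truncation to degree ≤ d of Σ_{j=0}^{d} A(1−B)^j. -/
import Mathlib


open Polynomial Finset

/-- Truncation of a univariate polynomial keeping only the monomials of degree
at most `d`. -/
noncomputable def truncLe {K : Type*} [Field K] (d : ℕ) (q : Polynomial K) :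
    Polynomial K :=
  ∑ i ∈ Finset.range (d + 1), Polynomial.C (q.coeff i) * Polynomial.X ^ i

/-- over an infinite field, if `B` is a polynomial with constant
term `1` and `A = p·B` for a polynomial `p` of degree at most `d`, then `p`
equals the truncation to degree `≤ d` of `Σ_{j=0}^{d} A·(1−B)^j`. -/
theorem division_elimination_truncation {K : Type*} [Field K] [Infinite K]
    (d : ℕ) (A B p : Polynomial K)
    (hB : B.coeff 0 = 1) (hA : A = p * B) (hp : p.degree ≤ d) :
    p = truncLe d (∑ j ∈ Finset.range (d + 1), A * (1 - B) ^ j) := by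
  have hX : (X : Polynomial K) ∣ (1 - B) := by
    rw [Polynomial.X_dvd_iff]; simp [hB]
  have hXpow : (X : Polynomial K) ^ (d + 1) ∣ p * (1 - B) ^ (d + 1) :=
    Dvd.dvd.mul_left (pow_dvd_pow_of_dvd hX (d + 1)) p
  have hcoeff : ∀ i ≤ d, (p * (1 - B) ^ (d + 1)).coeff i = 0 := by
    intro i hi
    exact (Polynomial.X_pow_dvd_iff.mp hXpow) i (Nat.lt_succ_of_le hi)
  have hgeom := geom_sum_mul (1 - B) (d + 1)
  have key : (∑ j ∈ Finset.range (d + 1), A * (1 - B) ^ j)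
      = p - p * (1 - B) ^ (d + 1) := by
    rw [← Finset.mul_sum, hA]
    linear_combination (-p) * hgeom
  rw [key]
  have hnd : p.natDegree < d + 1 :=
    Nat.lt_succ_of_le (Polynomial.natDegree_le_iff_degree_le.mpr hp)
  have hp' := p.as_sum_range' (d + 1) hnd
  unfold truncLe
  conv_lhs => rw [hp']
  refine Finset.sum_congr rfl fun i hi => ?_
  rw [Polynomial.coeff_sub, hcoeff i (Nat.lt_succ_iff.mp (Finset.mem_range.mp hi)),
    sub_zero, Polynomial.C_mul_X_pow_eq_monomial]
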